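/- Every universally Pnueli–Zaks monitorable property is existentially Pnueli–Zaks monitorable, but the converse fails: over the alphabet {s, f, r}, the property 'either s occurs before any f, or r occurs infinitely often' is existentially but not universally PZ-monitorable. -/

import Mathlib

/-- Finfinite traces over an alphabet `Act`: finite lists or infinite sequences. -/
inductive Trace (Act : Type) : Type where
  | fin : List Act → Trace Act
  | inf : (ℕ → Act) → Trace Act

/-- Concatenation of a finite trace with a finfinite trace. -/
def Trace.cat {Act : Type} (t : List Act) : Trace Act → Trace Act
  | .fin s => .fin (t ++ s)
  | .inf f => .inf (fun n => if h : n < t.length then t.get ⟨n, h⟩ else f (n - t.length))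

/-- A finite trace positively determines `P`: every finfinite extension is in `P`. -/
def PosDet {Act : Type} (P : Set (Trace Act)) (t : List Act) : Prop :=
  ∀ u : Trace Act, Trace.cat t u ∈ P

/-- A finite trace negatively determines `P`: every finfinite extension is not in `P`. -/
def NegDet {Act : Type} (P : Set (Trace Act)) (t : List Act) : Prop :=
  ∀ u : Trace Act, Trace.cat t u ∉ P

/-- A monitoring system: monitors with acceptance/rejection relations satisfying
finite-prefix witnessing and verdict persistence. -/
structure MonSys (Act : Type) where
  M : Type
  acc : M → Trace Act → Prop
  rej : M → Trace Act → Prop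
  acc_prefix : ∀ m u, acc m u → ∃ t : List Act, (∃ v, Trace.cat t v = u) ∧ acc m (Trace.fin t)
  rej_prefix : ∀ m u, rej m u → ∃ t : List Act, (∃ v, Trace.cat t v = u) ∧ rej m (Trace.fin t)
  acc_persist : ∀ m (t : List Act) (u : Trace Act), acc m (Trace.fin t) → acc m (Trace.cat t u)
  rej_persist : ∀ m (t : List Act) (u : Trace Act), rej m (Trace.fin t) → rej m (Trace.cat t u)

/-- Soundness of a monitor for a property. -/
def Sound {Act : Type} (S : MonSys Act) (m : S.M) (P : Set (Trace Act)) : Prop :=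
  (∀ u, S.acc m u → u ∈ P) ∧ (∀ u, S.rej m u → u ∉ P)

/-- The canonical (maximal) monitor for `P`: it accepts exactly the traces with a prefix
positively determining `P`, and rejects exactly those with a prefix negatively determining `P`. -/
def Canonical {Act : Type} (S : MonSys Act) (m : S.M) (P : Set (Trace Act)) : Prop :=
  (∀ u, S.acc m u ↔ ∃ t : List Act, (∃ v, Trace.cat t v = u) ∧ PosDet P t) ∧
  (∀ u, S.rej m u ↔ ∃ t : List Act, (∃ v, Trace.cat t v = u) ∧ NegDet P t)

/-- Safety: every violating trace has a finite prefix negatively determining `P`. -/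
def Safety {Act : Type} (P : Set (Trace Act)) : Prop :=
  ∀ u, u ∉ P → ∃ t : List Act, (∃ v, Trace.cat t v = u) ∧ NegDet P t

/-- Co-safety: every satisfying trace has a finite prefix positively determining `P`. -/
def CoSafety {Act : Type} (P : Set (Trace Act)) : Prop :=
  ∀ u, u ∈ P → ∃ t : List Act, (∃ v, Trace.cat t v = u) ∧ PosDet P t

/-- Universal Pnueli–Zaks monitorability. -/
def UPZ {Act : Type} (P : Set (Trace Act)) : Prop :=
  ∀ t : List Act, ∃ t' : List Act, PosDet P (t ++ t') ∨ NegDet P (t ++ t')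

/-- Existential Pnueli–Zaks monitorability. -/
def EPZ {Act : Type} (P : Set (Trace Act)) : Prop :=
  ∃ t : List Act, PosDet P t ∨ NegDet P t

/-- uPZ implies ePZ, but the converse fails: over Act = Fin 3
with s = 0, f = 1, r = 2, the property "s occurs before any f, or r occurs
infinitely often" is existentially but not universally PZ-monitorable. -/
theorem upz_implies_epz_not_conversely :
    (∀ (Act : Type) (P : Set (Trace Act)), UPZ P → EPZ P) ∧
    (EPZ {u : Trace (Fin 3) |
        (∃ w : List (Fin 3), (1 : Fin 3) ∉ w ∧ ∃ v, Trace.cat (w ++ [0]) v = u) ∨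
        (∃ g : ℕ → Fin 3, u = Trace.inf g ∧ ∀ n, ∃ k, n ≤ k ∧ g k = 2)} ∧
     ¬ UPZ {u : Trace (Fin 3) |
        (∃ w : List (Fin 3), (1 : Fin 3) ∉ w ∧ ∃ v, Trace.cat (w ++ [0]) v = u) ∨
        (∃ g : ℕ → Fin 3, u = Trace.inf g ∧ ∀ n, ∃ k, n ≤ k ∧ g k = 2)}) := by
  refine ⟨fun Act P h => ?_, ⟨[0], Or.inl fun u => Or.inl ⟨[], by simp, u, rfl⟩⟩, ?_⟩
  · obtain ⟨t', h'⟩ := h []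
    exact ⟨t', by simpa using h'⟩
  · intro h
    obtain ⟨t', h'⟩ := h [1]
    cases h' with
    | inl hp =>
      have hm := hp (.fin [])
      rcases hm with ⟨w, hw, v, hv⟩ | ⟨g, hg, _⟩
      · cases v with
        | fin s =>
          simp only [Trace.cat, Trace.fin.injEq] at hv
          cases w with
          | nil => simp at hv
          | cons a w' =>
            have : a = 1 := by simpa using congrArg (fun l => l.headI) hv
            exact hw (this ▸ (List.mem_cons_self : a ∈ a :: w'))
        | inf f => simp [Trace.cat] at hv
      · simp [Trace.cat] at hg
    | inr hn =>
      apply hn (.inf fun _ => 2)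
      right
      refine ⟨_, rfl, fun n => ⟨max n ([1] ++ t').length, le_max_left _ _, ?_⟩⟩
      simp only [Trace.cat]
      rw [dif_neg (Nat.not_lt.mpr (le_max_right _ _))]
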